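/- arXiv:1401.7863 — 3 statements merged into one kernel-verified Lean document; each statement's English description precedes it below -/
import Mathlib

section
/- Strict monotonicity of the rotation number at irrationals: if F₀ and F₁ are lifts of continuous, non-decreasing, degree-one circle maps with F₀(x) < F₁(x) for all x, and the translation number ρ̃(F₀) is irrational, then ρ̃(F₀) < ρ̃(F₁). -/
open Filter

/-- A lift of a continuous, non-decreasing, degree-one circle map. -/
def IsCircleLift (F : ℝ → ℝ) : Prop :=
  Continuous F ∧ Monotone F ∧ ∀ x : ℝ, F (x + 1) = F x + 1

/-- Density of `ℤ + ℤα` for irrational `α`: there exist `q ≥ 1` and `p : ℤ` with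
`q * α < p < q * α + δ`. -/
lemma exists_nat_int_approx (α : ℝ) (hirr : Irrational α) {δ : ℝ} (hδ : 0 < δ) :
    ∃ (q : ℕ) (p : ℤ), 1 ≤ q ∧ (q : ℝ) * α < p ∧ (p : ℝ) < q * α + δ := by
  set δ' : ℝ := min δ 1 with hδ'def
  have hδ'pos : 0 < δ' := lt_min hδ one_pos
  have hδ'le1 : δ' ≤ 1 := min_le_right _ _
  have hδ'leδ : δ' ≤ δ := min_le_left _ _
  set S : AddSubgroup ℝ := AddSubgroup.closure ({1, α} : Set ℝ) with hSdef
  have h1S : (1 : ℝ) ∈ S := AddSubgroup.subset_closure (by simp)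
  have hαS : α ∈ S := AddSubgroup.subset_closure (by simp)
  have hdense : Dense (S : Set ℝ) := by
    rcases S.dense_or_cyclic with hd | ⟨a, ha⟩
    · exact hd
    · exfalso
      rw [ha, AddSubgroup.mem_closure_singleton] at h1S hαS
      obtain ⟨n, hn⟩ := h1S
      obtain ⟨m, hm⟩ := hαS
      have hn0 : n ≠ 0 := by
        rintro rfl; simp at hn
      have hna : (n : ℝ) ≠ 0 := Int.cast_ne_zero.2 hn0
      have ha' : a = 1 / (n : ℝ) := by
        rw [zsmul_eq_mul] at hn
        field_simp
        linarith [hn]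
      refine hirr ⟨(m : ℚ) / (n : ℚ), ?_⟩
      rw [← hm, zsmul_eq_mul, ha']
      push_cast
      field_simp
  obtain ⟨s, hsS, hs0, hsδ'⟩ := hdense.exists_between hδ'pos
  rw [SetLike.mem_coe, hSdef, AddSubgroup.mem_closure_pair] at hsS
  obtain ⟨m, n, hmn⟩ := hsS
  rw [zsmul_eq_mul, zsmul_eq_mul, mul_one] at hmn
  -- s = m + n * α, with 0 < s < δ'
  have hn0 : n ≠ 0 := by
    rintro rfl
    rw [Int.cast_zero, zero_mul, add_zero] at hmn
    subst hmn
    have : (1 : ℝ) ≤ (m : ℝ) := by exact_mod_cast Int.cast_pos.1 hs0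
    linarith [lt_of_lt_of_le hsδ' hδ'le1]
  have hsirr : Irrational s := by
    rw [← hmn]
    exact ((hirr.intCast_mul hn0).intCast_add m)
  rcases lt_or_gt_of_ne hn0 with hneg | hpos
  · -- n < 0 : take q = -n, p = m
    refine ⟨(-n).toNat, m, ?_, ?_, ?_⟩
    · omega
    · have hq : ((((-n).toNat : ℕ) : ℝ)) = -(n : ℝ) := by
        have h : ((-n).toNat : ℤ) = -n := Int.toNat_of_nonneg (by omega)
        exact_mod_cast congrArg (fun z : ℤ => (z : ℝ)) h
      rw [hq]; nlinarith [hs0, hmn]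
    · have hq : ((((-n).toNat : ℕ) : ℝ)) = -(n : ℝ) := by
        have h : ((-n).toNat : ℤ) = -n := Int.toNat_of_nonneg (by omega)
        exact_mod_cast congrArg (fun z : ℤ => (z : ℝ)) h
      rw [hq]
      have : s < δ := lt_of_lt_of_le hsδ' hδ'leδ
      nlinarith [hmn]
  · -- n > 0 : take a multiple of s landing in (1 - δ', 1)
    obtain ⟨k, hk, -⟩ := existsUnique_add_zsmul_mem_Ioc hs0 (0 : ℝ) (1 - s)
    rw [zero_add, zsmul_eq_mul] at hk
    have hk2 : (k : ℝ) * s ≤ 1 := by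
      have := hk.2; linarith
    have hk1 : 1 - s < (k : ℝ) * s := hk.1
    have hksne : (k : ℝ) * s ≠ 1 := by
      intro h
      have hk0 : (k : ℝ) ≠ 0 := by
        intro h0; rw [h0, zero_mul] at h; norm_num at h
      have : s = 1 / (k : ℝ) := by field_simp; linarith [h]
      refine hsirr ⟨1 / (k : ℚ), ?_⟩
      rw [this]; push_cast; ring
    have hkslt1 : (k : ℝ) * s < 1 := lt_of_le_of_ne hk2 hksne
    have hkpos : 0 < k := by
      by_contra h
      push_neg at h
      have : (k : ℝ) ≤ 0 := by exact_mod_cast h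
      nlinarith [hs0, hk1, hsδ', hδ'le1]
    refine ⟨(k * n).toNat, 1 - k * m, ?_, ?_, ?_⟩
    · have : 0 < k * n := mul_pos hkpos hpos
      omega
    all_goals {
      have hq : ((((k * n).toNat : ℕ) : ℝ)) = (k : ℝ) * (n : ℝ) := by
        have h0 : (0:ℤ) ≤ k * n := le_of_lt (mul_pos hkpos hpos)
        have h : ((k * n).toNat : ℤ) = k * n := Int.toNat_of_nonneg h0
        have := congrArg (fun z : ℤ => (z : ℝ)) h
        push_cast at this
        exact this
      rw [hq]
      push_cast
      nlinarith [hmn, hk1, hkslt1, hs0, hsδ', hδ'leδ, hδ'le1] }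

open CircleDeg1Lift in
/-- strict monotonicity of the translation number at irrationals. -/
theorem translation_number_strict_mono_at_irrational (F₀ F₁ : ℝ → ℝ)
    (hF₀ : IsCircleLift F₀) (hF₁ : IsCircleLift F₁)
    (hlt : ∀ x : ℝ, F₀ x < F₁ x) (ρ₀ ρ₁ : ℝ)
    (hρ₀ : ∀ x : ℝ, Tendsto (fun n : ℕ => (F₀^[n] x - x) / n) atTop (nhds ρ₀))
    (hρ₁ : ∀ x : ℝ, Tendsto (fun n : ℕ => (F₁^[n] x - x) / n) atTop (nhds ρ₁))
    (hirr : Irrational ρ₀) :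
    ρ₀ < ρ₁ := by
  set f₀ : CircleDeg1Lift := ⟨⟨F₀, hF₀.2.1⟩, hF₀.2.2⟩ with hf₀def
  set f₁ : CircleDeg1Lift := ⟨⟨F₁, hF₁.2.1⟩, hF₁.2.2⟩ with hf₁def
  have hcf₀ : ⇑f₀ = F₀ := rfl
  have hcf₁ : ⇑f₁ = F₁ := rfl
  have hτ₀ : CircleDeg1Lift.translationNumber f₀ = ρ₀ := by
    refine f₀.translationNumber_eq_of_tendsto₀ ?_
    have h := hρ₀ 0
    simp only [sub_zero] at h
    exact h
  have hτ₁ : CircleDeg1Lift.translationNumber f₁ = ρ₁ := by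
    refine f₁.translationNumber_eq_of_tendsto₀ ?_
    have h := hρ₁ 0
    simp only [sub_zero] at h
    exact h
  -- uniform gap δ
  have hcont : Continuous fun x => F₁ x - F₀ x := hF₁.1.sub hF₀.1
  obtain ⟨x₀, hx₀mem, hx₀min⟩ :=
    isCompact_Icc.exists_isMinOn (Set.nonempty_Icc.2 zero_le_one) hcont.continuousOn
  set δ : ℝ := F₁ x₀ - F₀ x₀ with hδdef
  have hδpos : 0 < δ := sub_pos.2 (hlt x₀)
  have hδle : ∀ x : ℝ, δ ≤ F₁ x - F₀ x := by
    intro x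
    have hy : Int.fract x ∈ Set.Icc (0:ℝ) 1 :=
      ⟨Int.fract_nonneg x, (Int.fract_lt_one x).le⟩
    have h1 : δ ≤ F₁ (Int.fract x) - F₀ (Int.fract x) := hx₀min hy
    have e0 : F₀ (Int.fract x) = F₀ x - ⌊x⌋ := f₀.map_sub_int x ⌊x⌋
    have e1 : F₁ (Int.fract x) = F₁ x - ⌊x⌋ := f₁.map_sub_int x ⌊x⌋
    rw [e0, e1] at h1
    linarith
  -- iterates comparison
  have hiter : ∀ (n : ℕ) (x : ℝ), F₀^[n] x ≤ F₁^[n] x := by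
    intro n
    induction n with
    | zero => intro x; simp
    | succ n ih =>
      intro x
      rw [Function.iterate_succ_apply', Function.iterate_succ_apply']
      calc F₀ (F₀^[n] x) ≤ F₀ (F₁^[n] x) := hF₀.2.1 (ih x)
        _ ≤ F₁ (F₁^[n] x) := (hlt _).le
  have hgain : ∀ (n : ℕ) (x : ℝ), F₀^[n+1] x + δ ≤ F₁^[n+1] x := by
    intro n x
    rw [Function.iterate_succ_apply', Function.iterate_succ_apply']
    have h1 : F₀ (F₀^[n] x) ≤ F₀ (F₁^[n] x) := hF₀.2.1 (hiter n x)
    have h2 : δ ≤ F₁ (F₁^[n] x) - F₀ (F₁^[n] x) := hδle _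
    linarith
  by_contra hcon
  push_neg at hcon  -- ρ₁ ≤ ρ₀
  obtain ⟨q, p, hq1, hp1, hp2⟩ := exists_nat_int_approx ρ₀ hirr hδpos
  have hcontf₀ : Continuous ⇑f₀ := by rw [hcf₀]; exact hF₀.1
  have hcontq : Continuous ⇑(f₀ ^ q) := f₀.continuous_pow hcontf₀ q
  obtain ⟨x, hx⟩ := (f₀ ^ q).exists_eq_add_translationNumber hcontq
  rw [CircleDeg1Lift.translationNumber_pow, hτ₀] at hx
  have hxit : F₀^[q] x = x + q * ρ₀ := by
    rw [← hx]
    exact (congrFun (CircleDeg1Lift.coe_pow f₀ q) x).symm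
  have hq' : ∃ n, q = n + 1 := ⟨q - 1, by omega⟩
  obtain ⟨n, rfl⟩ := hq'
  have hge : x + (p : ℝ) ≤ F₁^[n+1] x := by
    have := hgain n x
    rw [hxit] at this
    linarith
  have hge' : x + ((p : ℝ)) ≤ (f₁ ^ (n+1)) x := by
    rw [show ((f₁ ^ (n+1)) x) = F₁^[n+1] x from congrFun (CircleDeg1Lift.coe_pow f₁ (n+1)) x]
    exact hge
  have hle : (p : ℝ) ≤ CircleDeg1Lift.translationNumber (f₁ ^ (n+1)) :=
    (f₁ ^ (n+1)).le_translationNumber_of_add_int_le hge' 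
  rw [CircleDeg1Lift.translationNumber_pow, hτ₁] at hle
  have hqpos : (0:ℝ) < ((n:ℕ)+1 : ℕ) := by positivity
  have : ((n+1 : ℕ) : ℝ) * ρ₁ ≤ ((n+1 : ℕ) : ℝ) * ρ₀ := by
    apply mul_le_mul_of_nonneg_left hcon (by positivity)
  linarith
end

section
/- Let f be a circle homeomorphism with irrational rotation number. If there exists an interval I ⊂ S¹ with |I| > 0 such that the lengths |f^n(I)| tend to 0 as n → +∞, then f has a wandering interval, and hence f is not topologically conjugate to a rotation. -/
open Filter MeasureTheory

/-- A non-empty open interval (arc) of the circle. -/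
def IsOpenArc (I : Set (AddCircle (1 : ℝ))) : Prop :=
  ∃ a b : ℝ, a < b ∧ b - a < 1 ∧
    I = (fun x : ℝ => (x : AddCircle (1 : ℝ))) '' Set.Ioo a b

/-- A wandering interval for `f`. -/
def IsWanderingInterval (f : AddCircle (1 : ℝ) → AddCircle (1 : ℝ))
    (I : Set (AddCircle (1 : ℝ))) : Prop :=
  IsOpenArc I ∧ ∀ n m : ℕ, n ≠ m → f^[n] '' I ∩ f^[m] '' I = ∅

namespace WanderingAux

open Set

lemma coe_eq_iff' (x y : ℝ) :
    (x : AddCircle (1:ℝ)) = (y : AddCircle (1:ℝ)) ↔ ∃ m : ℤ, x - y = m := by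
  rw [QuotientAddGroup.eq_iff_sub_mem, AddSubgroup.mem_zmultiples_iff]
  constructor
  · rintro ⟨k, hk⟩; exact ⟨k, by simpa using hk.symm⟩
  · rintro ⟨m, hm⟩; exact ⟨m, by simpa using hm.symm⟩

lemma univ_eq_image (a : ℝ) :
    ((fun x : ℝ => (x : AddCircle (1:ℝ))) '' Ioc a (a+1)) = univ :=
  AddCircle.coe_image_Ioc_eq 1 a

/-- lifting relation passes to iterates -/
lemma lift_iter {G : ℝ → ℝ} {g : AddCircle (1:ℝ) → AddCircle (1:ℝ)}
    (h : ∀ x : ℝ, ((G x : ℝ) : AddCircle (1:ℝ)) = g (x : AddCircle (1:ℝ))) :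
    ∀ (n : ℕ) (x : ℝ), ((G^[n] x : ℝ) : AddCircle (1:ℝ)) = g^[n] (x : AddCircle (1:ℝ)) := by
  intro n
  induction n with
  | zero => intro x; simp
  | succ n ih =>
      intro x
      rw [Function.iterate_succ_apply', Function.iterate_succ_apply', h, ih]

/-- degree one maps commute with integer translations -/
lemma per_int {F : ℝ → ℝ} (hper : ∀ x : ℝ, F (x + 1) = F x + 1) :
    ∀ (m : ℤ) (x : ℝ), F (x + m) = F x + m := by
  intro m
  induction m using Int.induction_on with
  | zero => simp
  | succ n ih =>
      intro x
      have : (x + ((n:ℤ)+1 : ℤ) : ℝ) = (x + (n:ℤ)) + 1 := by push_cast; ring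
      rw [this, hper, ih]; push_cast; ring
  | pred n ih =>
      intro x
      have h1 : (x + (-(n:ℤ)-1 : ℤ) : ℝ) + 1 = x + (-(n:ℤ) : ℤ) := by push_cast; ring
      have := hper (x + (-(n:ℤ)-1 : ℤ))
      rw [h1, ih] at this
      have := this.symm
      push_cast at this ⊢
      linarith

lemma per_int_iter {F : ℝ → ℝ} (hper : ∀ x : ℝ, F (x + 1) = F x + 1) :
    ∀ (n : ℕ) (m : ℤ) (x : ℝ), F^[n] (x + m) = F^[n] x + m := by
  intro n
  induction n with
  | zero => intro m x; simp
  | succ n ih =>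
      intro m x
      rw [Function.iterate_succ_apply, Function.iterate_succ_apply, per_int hper, ih]

lemma iter_grows {L : ℝ → ℝ} (hc : Continuous L) (hex : ∀ x, x < L x) (a M : ℝ) :
    ∃ K : ℕ, M < L^[K] a := by
  by_contra hcon
  push_neg at hcon
  have hmono : Monotone fun j : ℕ => L^[j] a := by
    apply monotone_nat_of_le_succ
    intro n
    rw [Function.iterate_succ_apply']
    exact (hex _).le
  have hbdd : BddAbove (Set.range fun j : ℕ => L^[j] a) := by
    refine ⟨M, ?_⟩; rintro y ⟨j, rfl⟩; exact hcon j
  have hlim := tendsto_atTop_ciSup hmono hbdd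
  set ℓ := ⨆ j, L^[j] a with hℓ
  have h1 : Tendsto (fun j : ℕ => L^[j+1] a) atTop (nhds ℓ) :=
    hlim.comp (tendsto_add_atTop_nat 1)
  have h2 : Tendsto (fun j : ℕ => L (L^[j] a)) atTop (nhds (L ℓ)) :=
    (hc.continuousAt.tendsto).comp hlim
  have h3 : (fun j : ℕ => L^[j+1] a) = fun j : ℕ => L (L^[j] a) := by
    funext j; rw [Function.iterate_succ_apply']
  rw [h3] at h1
  exact (hex ℓ).ne (tendsto_nhds_unique h1 h2)

lemma iter_union {L : ℝ → ℝ} {a b : ℝ} (hm : StrictMono L) (hLab : L a < b) :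
    ∀ K : ℕ, Ioo a (L^[K] b) ⊆ ⋃ j ∈ Finset.range (K+1), Ioo (L^[j] a) (L^[j] b) := by
  have hov : ∀ j : ℕ, L^[j+1] a < L^[j] b := by
    intro j
    rw [Function.iterate_succ_apply]
    exact hm.iterate j hLab
  intro K
  induction K with
  | zero => intro y hy
            refine mem_biUnion (Finset.self_mem_range_succ 0) ?_
            simpa using hy
  | succ K ih =>
      intro y hy
      rcases lt_or_ge y (L^[K] b) with h | h
      · have := ih ⟨hy.1, h⟩
        rcases mem_iUnion₂.mp this with ⟨j, hj, hyj⟩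
        have hj' : j ∈ Finset.range (K+2) := by simp at hj ⊢; omega
        exact mem_biUnion hj' hyj
      · refine mem_biUnion (Finset.self_mem_range_succ (K+1)) ?_
        exact ⟨lt_of_lt_of_le (hov K) h, hy.2⟩

lemma cancel_iter (f : AddCircle (1 : ℝ) ≃ₜ AddCircle (1 : ℝ)) :
    ∀ (s : ℕ) (z : AddCircle (1:ℝ)), (⇑f)^[s] ((⇑f.symm)^[s] z) = z := by
  intro s
  induction s with
  | zero => intro z; simp
  | succ s ih =>
      intro z
      rw [Function.iterate_succ_apply' (⇑f), Function.iterate_succ_apply (⇑f.symm), ih, f.apply_symm_apply]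

end WanderingAux

open WanderingAux Set

/-- if some interval of positive length has iterates whose lengths
tend to 0, then `f` has a wandering interval and is not conjugate to a rotation. -/
theorem wandering_of_shrinking_interval
    (f : AddCircle (1 : ℝ) ≃ₜ AddCircle (1 : ℝ)) (ρ : ℝ) (hirr : Irrational ρ)
    (F : ℝ → ℝ) (hF : IsCircleLift F)
    (hlift : ∀ x : ℝ, ((F x : AddCircle (1 : ℝ))) = f (x : AddCircle (1 : ℝ)))
    (hρ : ∀ x : ℝ, Tendsto (fun n : ℕ => (F^[n] x - x) / n) atTop (nhds ρ))
    (I : Set (AddCircle (1 : ℝ))) (hI : IsOpenArc I) (hpos : 0 < volume I)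
    (hshrink : Tendsto (fun n : ℕ => volume ((⇑f)^[n] '' I)) atTop (nhds 0)) :
    (∃ J : Set (AddCircle (1 : ℝ)), IsWanderingInterval (⇑f) J) ∧
    ¬ ∃ (σ : ℝ) (h : AddCircle (1 : ℝ) ≃ₜ AddCircle (1 : ℝ)),
        ∀ x : AddCircle (1 : ℝ), h (f x) = h x + (σ : AddCircle (1 : ℝ)) := by
  obtain ⟨hcont, hmono, hper⟩ := hF
  obtain ⟨a, b, hab, hblen, hIeq⟩ := hI
  -- F is strictly monotone
  have hFsm : StrictMono F := by
    intro x y hxy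
    rcases lt_or_ge y (x+1) with hy1 | hy1
    · refine (hmono hxy.le).lt_of_ne fun heq => ?_
      have hfi : f (x : AddCircle (1:ℝ)) = f (y : AddCircle (1:ℝ)) := by
        rw [← hlift, ← hlift, heq]
      have hpi := f.injective hfi
      rcases (coe_eq_iff' x y).mp hpi with ⟨m, hm⟩
      have h1 : (-1:ℝ) < (m:ℝ) := by rw [← hm]; linarith
      have h2 : (m:ℝ) < 0 := by rw [← hm]; linarith
      have h1' : (-1:ℤ) < m := by exact_mod_cast h1
      have h2' : m < (0:ℤ) := by exact_mod_cast h2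
      omega
    · calc F x < F x + 1 := by linarith
        _ = F (x+1) := (hper x).symm
        _ ≤ F y := hmono hy1
  -- F is surjective
  have hFsurj : Function.Surjective F := by
    intro y
    set m : ℤ := ⌊y - F 0⌋ with hm
    have hfl : (m:ℝ) ≤ y - F 0 := Int.floor_le _
    have hcl : y - F 0 < (m:ℝ) + 1 := Int.lt_floor_add_one _
    have hFm : F (m:ℝ) = F 0 + m := by
      have := per_int hper m 0
      simpa using this
    have hFm1 : F ((m:ℝ)+1) = F 0 + m + 1 := by rw [hper, hFm]
    have hy : y ∈ Icc (F (m:ℝ)) (F ((m:ℝ)+1)) := by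
      constructor
      · rw [hFm]; linarith
      · rw [hFm1]; linarith
    have hsub := intermediate_value_Icc (by linarith : (m:ℝ) ≤ (m:ℝ)+1) hcont.continuousOn
    obtain ⟨x, _, hx⟩ := hsub hy
    exact ⟨x, hx⟩
  have hliftn : ∀ (n : ℕ) (x : ℝ),
      ((F^[n] x : ℝ) : AddCircle (1:ℝ)) = (⇑f)^[n] (x : AddCircle (1:ℝ)) :=
    lift_iter hlift
  -- key claim: no iterate of I returns to I
  have key : ∀ k : ℕ, k ≠ 0 → ((⇑f)^[k] '' I) ∩ I = ∅ := by
    intro k hk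
    by_contra hne
    obtain ⟨z, hz1, hz2⟩ := Set.nonempty_iff_ne_empty.mpr hne
    rw [hIeq] at hz1 hz2
    obtain ⟨_, ⟨u, hu, rfl⟩, hzu⟩ := hz1
    obtain ⟨v, hv, hzv⟩ := hz2
    have hkv : ((F^[k] u : ℝ) : AddCircle (1:ℝ)) = (v : AddCircle (1:ℝ)) := by
      rw [hliftn]; exact hzu.trans hzv.symm
    obtain ⟨p, hp⟩ := (coe_eq_iff' _ _).mp hkv
    set H : ℝ → ℝ := fun x => F^[k] x - (p:ℝ) with hH
    have hHc : Continuous H := (hcont.iterate k).sub continuous_const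
    have hHsm : StrictMono H := fun x y hxy => by
      simp only [hH]
      have := (hFsm.iterate k) hxy
      linarith
    have hHsurj : Function.Surjective H := by
      intro y
      obtain ⟨x, hx⟩ := (hFsurj.iterate k) (y + p)
      exact ⟨x, by simp [hH, hx]⟩
    have hHu : H u = v := by simp only [hH]; linarith
    have hHlift : ∀ x : ℝ, ((H x : ℝ) : AddCircle (1:ℝ)) = (⇑f)^[k] (x : AddCircle (1:ℝ)) := by
      intro x
      have h1 : ((H x : ℝ) : AddCircle (1:ℝ)) = ((F^[k] x : ℝ) : AddCircle (1:ℝ)) :=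
        (coe_eq_iff' _ _).mpr ⟨-p, by simp [hH]⟩
      rw [h1, hliftn]
    have hk1 : 1 ≤ k := Nat.one_le_iff_ne_zero.mpr hk
    -- H has no fixed points
    have hnofix : ∀ x, H x ≠ x := by
      intro x₀ hfix
      have hkx : F^[k] x₀ = x₀ + (p:ℝ) := by
        simp only [hH] at hfix; linarith
      have hiter : ∀ j : ℕ, F^[k*j] x₀ = x₀ + (j:ℝ)*(p:ℝ) := by
        intro j
        induction j with
        | zero => simp
        | succ j ih =>
            have hkj : k*(j+1) = k*j + k := by ring
            rw [hkj, Function.iterate_add_apply, hkx]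
            have := per_int_iter hper (k*j) p x₀
            rw [this, ih]; push_cast; ring
      have hkj : Tendsto (fun j : ℕ => k*j) atTop atTop := by
        apply StrictMono.tendsto_atTop
        intro s t hst
        exact (Nat.mul_lt_mul_left hk1).mpr hst
      have htend : Tendsto (fun j : ℕ => (F^[k*j] x₀ - x₀)/((k*j : ℕ):ℝ)) atTop (nhds ρ) :=
        (hρ x₀).comp hkj
      have heq : ∀ᶠ j in atTop, (F^[k*j] x₀ - x₀)/((k*j : ℕ):ℝ) = (p:ℝ)/(k:ℝ) := by
        filter_upwards [eventually_ge_atTop 1] with j hj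
        rw [hiter j]
        have hjne : (j:ℝ) ≠ 0 := by positivity
        have hkne : (k:ℝ) ≠ 0 := by positivity
        push_cast
        field_simp
        ring
      have htend2 : Tendsto (fun j : ℕ => (F^[k*j] x₀ - x₀)/((k*j : ℕ):ℝ)) atTop
          (nhds ((p:ℝ)/(k:ℝ))) :=
        Tendsto.congr' (heq.mono fun j hj => hj.symm) tendsto_const_nhds
      have hrho : ρ = (p:ℝ)/(k:ℝ) := tendsto_nhds_unique htend htend2
      have : ρ = ((p/k : ℚ) : ℝ) := by
        rw [hrho]; push_cast; ring
      rw [this] at hirr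
      exact Rat.not_irrational _ hirr
    -- dichotomy
    have hdich : (∀ x, x < H x) ∨ (∀ x, H x < x) := by
      by_contra hcon
      push_neg at hcon
      obtain ⟨⟨x₁, hx₁⟩, ⟨x₂, hx₂⟩⟩ := hcon
      have h0 : (0:ℝ) ∈ uIcc (H x₁ - x₁) (H x₂ - x₂) := by
        rw [Set.mem_uIcc]
        left; exact ⟨by linarith, by linarith⟩
      obtain ⟨x₀, _, hx₀⟩ :=
        intermediate_value_uIcc (f := fun x => H x - x)
          ((hHc.sub continuous_id).continuousOn) h0
      exact hnofix x₀ (by dsimp at hx₀; linarith)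
    -- covering in both cases
    obtain ⟨K, hcover⟩ : ∃ K : ℕ, ∀ t : ℕ, ∃ e : ℕ → ℕ, (∀ j, t ≤ e j) ∧
        (Set.univ : Set (AddCircle (1:ℝ))) ⊆
          ⋃ j ∈ Finset.range (K+1), (⇑f)^[e j] '' I := by
      have genCover : ∀ (L : ℝ → ℝ) (g : AddCircle (1:ℝ) → AddCircle (1:ℝ)),
          Continuous L → StrictMono L → (∀ x, x < L x) → L a < b →
          (∀ x : ℝ, ((L x : ℝ) : AddCircle (1:ℝ)) = g (x : AddCircle (1:ℝ))) →
          ∃ K : ℕ, (Set.univ : Set (AddCircle (1:ℝ))) ⊆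
            ⋃ j ∈ Finset.range (K+1), g^[j] '' I := by
        intro L g hLc hLsm hLex hLa hLlift
        obtain ⟨K, hK⟩ := iter_grows hLc hLex a (a+1)
        refine ⟨K, ?_⟩
        intro z _
        have hz : z ∈ (fun x : ℝ => (x : AddCircle (1:ℝ))) '' Ioc a (a+1) := by
          rw [univ_eq_image a]; trivial
        obtain ⟨x, hx, hxz⟩ := hz
        have hxmem : x ∈ Ioo a (L^[K] b) := by
          refine ⟨hx.1, ?_⟩
          have h1 : L^[K] a < L^[K] b := hLsm.iterate K hab
          have := hx.2
          linarith
        obtain ⟨j, hj, hxj⟩ := mem_iUnion₂.mp (iter_union hLsm hLa K hxmem)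
        obtain ⟨w, hw, hwx⟩ :=
          intermediate_value_Ioo hab.le ((hLc.iterate j).continuousOn) hxj
        refine mem_biUnion hj ⟨(w : AddCircle (1:ℝ)), ?_, ?_⟩
        · rw [hIeq]; exact ⟨w, hw, rfl⟩
        · have h1 := lift_iter hLlift j w
          rw [hwx] at h1
          exact h1.symm.trans hxz
      rcases hdich with hup | hdown
      · -- H moves points forward
        have hLa : H a < b := by
          have h1 : H a < H u := hHsm hu.1
          rw [hHu] at h1
          linarith [hv.2]
        obtain ⟨K, hcov⟩ := genCover H ((⇑f)^[k]) hHc hHsm hup hLa hHlift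
        refine ⟨K, fun t => ⟨fun j => t + k*j, fun j => Nat.le_add_right _ _, ?_⟩⟩
        intro z _
        obtain ⟨z', rfl⟩ := ((f.surjective).iterate t) z
        obtain ⟨j, hj, hz'mem⟩ := mem_iUnion₂.mp (hcov (mem_univ z'))
        obtain ⟨w, hwI, hwz⟩ := hz'mem
        refine mem_biUnion hj ⟨w, hwI, ?_⟩
        rw [Function.iterate_add_apply, Function.iterate_mul, hwz]
      · -- H moves points backward; use its inverse
        set e : ℝ ≃o ℝ := StrictMono.orderIsoOfSurjective H hHsm hHsurj with he
        have hecoe : ∀ x, e x = H x := fun _ => rfl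
        set L : ℝ → ℝ := fun y => e.symm y with hL
        have hHL : ∀ y, H (L y) = y := by
          intro y
          have := e.apply_symm_apply y
          rw [← hecoe]; exact this
        have hLsm : StrictMono L := fun x y hxy => e.symm.strictMono hxy
        have hLc : Continuous L := (e.symm.toHomeomorph).continuous
        have hLex : ∀ y, y < L y := by
          intro y
          have := hdown (L y)
          rw [hHL] at this
          exact this
        have hLa : L a < b := by
          have h1 : a < H b := by
            have h2 : H u < H b := hHsm hu.2
            rw [hHu] at h2
            linarith [hv.1, hHu]
          have h3 : H (L a) = a := hHL a
          have := hHsm.lt_iff_lt (a := L a) (b := b)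
          rw [h3] at this
          exact this.mp h1
        have hLlift : ∀ x : ℝ,
            ((L x : ℝ) : AddCircle (1:ℝ)) = (⇑f.symm)^[k] (x : AddCircle (1:ℝ)) := by
          intro x
          apply (f.injective.iterate k)
          rw [← hHlift (L x), hHL, cancel_iter f k]
        obtain ⟨K, hcov⟩ := genCover L ((⇑f.symm)^[k]) hLc hLsm hLex hLa hLlift
        refine ⟨K, fun t => ⟨fun j => t + k*(K-j), fun j => Nat.le_add_right _ _, ?_⟩⟩
        intro z _
        obtain ⟨z', rfl⟩ := ((f.surjective).iterate (t + k*K)) z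
        obtain ⟨j, hj, hz'mem⟩ := mem_iUnion₂.mp (hcov (mem_univ z'))
        obtain ⟨w, hwI, hwz⟩ := hz'mem
        have hjK : j ≤ K := by
          have := Finset.mem_range.mp hj; omega
        have harith : t + k*K = (t + k*(K-j)) + k*j := by
          have : k*(K-j) + k*j = k*K := by
            rw [← Nat.mul_add]
            congr 1
            omega
          omega
        have hz'' : (⇑f)^[t + k*K] z' = (⇑f)^[t + k*(K-j)] w := by
          rw [← hwz, ← Function.iterate_mul, harith, Function.iterate_add_apply,
            cancel_iter f (k*j)]
        exact mem_biUnion hj ⟨w, hwI, hz''.symm⟩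
    -- final measure contradiction
    set ε : ENNReal := (1/2) / ((K:ENNReal)+1) with hε
    have hεpos : (0:ENNReal) < ε := ENNReal.div_pos (by norm_num) (by simp)
    have hev : ∀ᶠ n in atTop, volume ((⇑f)^[n] '' I) < ε :=
      hshrink.eventually_lt_const hεpos
    obtain ⟨T, hT⟩ := eventually_atTop.mp hev
    obtain ⟨e, heT, hsub⟩ := hcover T
    have huniv : volume (Set.univ : Set (AddCircle (1:ℝ))) = 1 := by
      rw [AddCircle.measure_univ]; simp
    have h1 : (1:ENNReal) ≤ volume (⋃ j ∈ Finset.range (K+1), (⇑f)^[e j] '' I) := by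
      rw [← huniv]
      exact measure_mono hsub
    have h2 := measure_biUnion_finset_le (μ := (volume : Measure (AddCircle (1:ℝ)))) (Finset.range (K+1)) (fun j => (⇑f)^[e j] '' I)
    have h3 : ∑ j ∈ Finset.range (K+1), volume ((⇑f)^[e j] '' I) ≤
        ∑ _j ∈ Finset.range (K+1), ε :=
      Finset.sum_le_sum fun j _ => (hT (e j) (heT j)).le
    have h4 : ∑ _j ∈ Finset.range (K+1), ε = ((K:ENNReal)+1) * ε := by
      rw [Finset.sum_const, Finset.card_range, nsmul_eq_mul]; push_cast; ring
    have h5 : ((K:ENNReal)+1) * ε = 1/2 := by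
      rw [hε]
      exact ENNReal.mul_div_cancel' (by simp) (by simp)
    have : (1:ENNReal) ≤ 1/2 := by
      calc (1:ENNReal) ≤ _ := h1
        _ ≤ _ := h2
        _ ≤ _ := h3
        _ = 1/2 := by rw [h4, h5]
    norm_num at this
  -- I itself is a wandering interval
  have hwander : IsWanderingInterval (⇑f) I := by
    refine ⟨⟨a, b, hab, hblen, hIeq⟩, ?_⟩
    have base : ∀ n d : ℕ, d ≠ 0 →
        (⇑f)^[n] '' I ∩ (⇑f)^[n+d] '' I = ∅ := by
      intro n d hd
      have h1 : (⇑f)^[n+d] '' I = (⇑f)^[n] '' ((⇑f)^[d] '' I) := by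
        rw [← Set.image_comp, ← Function.iterate_add]
      rw [h1, ← Set.image_inter (f.injective.iterate n), Set.inter_comm, key d hd,
        Set.image_empty]
    intro n m hnm
    rcases lt_or_gt_of_ne hnm with h | h
    · have hd : m = n + (m - n) := by omega
      rw [hd]
      exact base n (m-n) (by omega)
    · have hd : n = m + (n - m) := by omega
      rw [hd, Set.inter_comm]
      exact base m (n-m) (by omega)
  refine ⟨⟨I, hwander⟩, ?_⟩
  -- part 2 : no conjugacy to a rotation
  rintro ⟨σ, h, hconj⟩
  set σ' : AddCircle (1:ℝ) := ((σ:ℝ) : AddCircle (1:ℝ)) with hσ'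
  have hIopen : IsOpen I := by
    rw [hIeq]
    exact QuotientAddGroup.isOpenMap_coe _ isOpen_Ioo
  have hInon : I.Nonempty := by
    rw [hIeq]
    exact ⟨_, ⟨(a+b)/2, ⟨by linarith, by linarith⟩, rfl⟩⟩
  have hJopen : IsOpen (⇑h '' I) := h.isOpen_image.mpr hIopen
  have hv : 0 < volume (⇑h '' I) := hJopen.measure_pos _ (hInon.image _)
  have hhit : ∀ (n : ℕ) (x : AddCircle (1:ℝ)), h ((⇑f)^[n] x) = h x + n • σ' := by
    intro n
    induction n with
    | zero => intro x; simp
    | succ n ih =>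
        intro x
        rw [Function.iterate_succ_apply', hconj, ih, succ_nsmul, add_assoc]
  set T : ℕ → Set (AddCircle (1:ℝ)) := fun n => (fun y => y + n • σ') '' (⇑h '' I) with hTdef
  have hTeq : ∀ n, T n = ⇑h '' ((⇑f)^[n] '' I) := by
    intro n
    rw [hTdef]
    simp only [← Set.image_comp]
    apply congrFun
    apply congrArg
    funext x
    simp [Function.comp, hhit n x]
  have hTvol : ∀ n, volume (T n) = volume (⇑h '' I) := by
    intro n
    rw [hTdef]
    simp only []
    rw [Set.image_add_right]
    exact measure_preimage_add_right volume _ _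
  have hTmeas : ∀ n, MeasurableSet (T n) := by
    intro n
    rw [hTdef]
    simp only []
    rw [Set.image_add_right]
    exact (hJopen.preimage (continuous_add_right _)).measurableSet
  have hTdisj : Pairwise (Function.onFun Disjoint T) := by
    intro n m hnm
    rw [Function.onFun, Set.disjoint_iff_inter_eq_empty, hTeq n, hTeq m,
      ← Set.image_inter h.injective, hwander.2 n m hnm, Set.image_empty]
  have hsum := measure_iUnion (μ := volume) hTdisj hTmeas
  have htop : ∑' n : ℕ, volume (T n) = ⊤ := by
    have : ∀ n : ℕ, volume (T n) = volume (⇑h '' I) := hTvol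
    rw [tsum_congr this]
    exact ENNReal.tsum_const_eq_top_of_ne_zero hv.ne'
  have hle : volume (⋃ n, T n) ≤ 1 := by
    have huniv : volume (Set.univ : Set (AddCircle (1:ℝ))) = 1 := by
      rw [AddCircle.measure_univ]; simp
    rw [← huniv]
    exact measure_mono (Set.subset_univ _)
  rw [hsum, htop] at hle
  simp at hle
end

section
/- Rotation number correction by translation: let f be a continuous, non-decreasing, degree-one circle map with lift F and irrational translation number ρ, and let G be a lift of another such map with ‖G − F‖_{C⁰} < δ. Then there exists t ∈ [−δ, δ] such that the lift G + t has translation number exactly ρ. -/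
open Filter

/-- if `F` has irrational translation number `ρ` and `G` is
`C⁰`-close to `F` (within `δ`), then some translate `G + t`, `t ∈ [-δ, δ]`,
has translation number exactly `ρ`. -/
theorem rotation_number_correction (F G : ℝ → ℝ)
    (hF : IsCircleLift F) (hG : IsCircleLift G)
    (ρ : ℝ) (hirr : Irrational ρ)
    (hρ : ∀ x : ℝ, Tendsto (fun n : ℕ => (F^[n] x - x) / n) atTop (nhds ρ))
    (δ : ℝ) (hδ : 0 < δ)
    (hclose : ∀ x ∈ Set.Icc (0:ℝ) 1, |G x - F x| < δ) :
    ∃ t ∈ Set.Icc (-δ) δ, ∀ x : ℝ,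
      Tendsto (fun n : ℕ => ((fun y => G y + t)^[n] x - x) / n) atTop (nhds ρ) := by
  -- package `F` as a `CircleDeg1Lift`
  set Fhat : CircleDeg1Lift := ⟨⟨F, hF.2.1⟩, hF.2.2⟩ with hFhat
  have hFcoe : ⇑Fhat = F := rfl
  -- package `G + t` as a `CircleDeg1Lift`
  have hGmono : Monotone G := hG.2.1
  set g : ℝ → CircleDeg1Lift := fun t =>
    ⟨⟨fun y => G y + t, fun a b hab => by
        dsimp; exact add_le_add (hGmono hab) (le_refl t)⟩,
      fun x => by dsimp; show G (x + 1) + t = G x + t + 1; rw [hG.2.2 x]; ring⟩ with hg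
  have hgcoe : ∀ t, ⇑(g t) = fun y => G y + t := fun t => rfl
  -- `τ Fhat = ρ`
  have hτF : Fhat.translationNumber = ρ := by
    apply Fhat.translationNumber_eq_of_tendsto₀
    simpa [hFcoe] using hρ 0
  -- extend closeness to all of ℝ using periodicity
  have hGhat : ∀ x : ℝ, (g 0) x = G x := fun x => by simp [hgcoe]
  have hclose' : ∀ x : ℝ, |G x - F x| < δ := by
    intro x
    have hx : Int.fract x + (⌊x⌋ : ℝ) = x := by
      rw [Int.fract]; ring
    have hGx : G x = G (Int.fract x) + ⌊x⌋ := by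
      have := (g 0).map_add_int (Int.fract x) ⌊x⌋
      rw [hx] at this
      simpa [hGhat] using this
    have hFx : F x = F (Int.fract x) + ⌊x⌋ := by
      have := Fhat.map_add_int (Int.fract x) ⌊x⌋
      rw [hx] at this
      simpa [hFcoe] using this
    rw [hGx, hFx]
    have : G (Int.fract x) + ⌊x⌋ - (F (Int.fract x) + ⌊x⌋)
        = G (Int.fract x) - F (Int.fract x) := by ring
    rw [this]
    exact hclose _ ⟨Int.fract_nonneg x, (Int.fract_lt_one x).le⟩
  -- define the correction map `h t = τ (g t)`
  set h : ℝ → ℝ := fun t => (g t).translationNumber with hh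
  -- endpoint estimates
  have hlow : h (-δ) ≤ ρ := by
    rw [← hτF]
    apply CircleDeg1Lift.translationNumber_mono
    intro x
    show G x + -δ ≤ F x
    have := (abs_lt.1 (hclose' x)).2
    linarith
  have hhigh : ρ ≤ h δ := by
    rw [← hτF]
    apply CircleDeg1Lift.translationNumber_mono
    intro x
    show F x ≤ G x + δ
    have := (abs_lt.1 (hclose' x)).1
    linarith
  -- continuity of `h` via uniform approximation
  have hφcont : ∀ n : ℕ, Continuous fun t => (fun y => G y + t)^[n] 0 := by
    intro n
    induction n with
    | zero => simpa using continuous_const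
    | succ n ih =>
      have : (fun t => (fun y => G y + t)^[n + 1] 0)
          = fun t => G ((fun y => G y + t)^[n] 0) + t := by
        funext t
        rw [Function.iterate_succ_apply']
      rw [this]
      exact (hG.1.comp ih).add continuous_id
  have hdist : ∀ (n : ℕ), 0 < n → ∀ (t : ℝ),
      dist ((fun y => G y + t)^[n] 0 / n) (h t) ≤ 1 / n := by
    intro n hn t
    have hnpos : (0 : ℝ) < n := by exact_mod_cast hn
    have h1 := (g t).dist_pow_map_zero_mul_translationNumber_le n
    have h2 : ((g t) ^ n) 0 = (fun y => G y + t)^[n] 0 := by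
      rw [CircleDeg1Lift.coe_pow, hgcoe]
    rw [h2] at h1
    rw [Real.dist_eq] at h1 ⊢
    rw [div_sub' hnpos.ne', abs_div, abs_of_pos hnpos,
      div_le_div_iff_of_pos_right hnpos]
    exact h1
  have hcont : Continuous h := by
    have hunif : TendstoUniformly (fun (n : ℕ) (t : ℝ) =>
        (fun y => G y + t)^[n] 0 / n) h atTop := by
      rw [Metric.tendstoUniformly_iff]
      intro ε hε
      obtain ⟨N, hN⟩ := exists_nat_gt (1 / ε)
      filter_upwards [eventually_ge_atTop (N + 1)] with n hn t
      rw [dist_comm]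
      have hn1 : 0 < n := Nat.lt_of_lt_of_le (Nat.succ_pos N) hn
      have hNn : (1:ℝ)/ε < n := lt_of_lt_of_le hN (by exact_mod_cast Nat.le_of_succ_le hn)
      refine lt_of_le_of_lt (hdist n hn1 t) ?_
      rw [div_lt_iff₀ (by exact_mod_cast hn1)]
      calc (1:ℝ) = ε * (1/ε) := by field_simp
        _ < ε * n := by
          apply mul_lt_mul_of_pos_left hNn hε
    exact hunif.continuous (Eventually.of_forall fun n => (hφcont n).div_const _).frequently
  -- intermediate value theorem
  have hmem : ρ ∈ Set.Icc (h (-δ)) (h δ) := ⟨hlow, hhigh⟩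
  have := intermediate_value_Icc (by linarith : -δ ≤ δ) hcont.continuousOn hmem
  obtain ⟨t, ht, hteq⟩ := this
  refine ⟨t, ht, fun x => ?_⟩
  have := (g t).tendsto_translationNumber x
  have hteq' : (g t).translationNumber = ρ := hteq
  rw [hteq'] at this
  refine this.congr fun n => ?_
  rw [CircleDeg1Lift.coe_pow, hgcoe]
end
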